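/- Let n ≥ 2 be an integer, r > 0, and f : [0,r] → ℝ a C² function with f(0) = 0, f'(0) = 1, and f(t) > 0 for all t ∈ (0,r]. Let λ ∈ ℝ and let φ : [0,r] → ℝ be a radial first eigenfunction with eigenvalue λ, i.e. φ is C² on [0,r], φ(t) > 0 for t ∈ [0,r), φ(r) = 0, φ'(0) = 0, and φ''(t) + (n−1)(f'(t)/f(t))φ'(t) + λφ(t) = 0 on (0,r). Then λ ≥ 1 / ( ∫₀ʳ (1/f(σ)^{n−1}) · (∫₀^σ f(s)^{n−1} ds) dσ ). -/

import Mathlib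

open Set intervalIntegral

/-- Barroso–Bessa lower bound: a radial first eigenvalue `λ` of the geodesic ball of
radius `r` in a spherically symmetric manifold with metric coefficient `f` satisfies
`λ ≥ 1 / ∫₀ʳ f(σ)^{-(n-1)} ∫₀^σ f(s)^{n-1} ds dσ`. -/
theorem stmt8 (n : ℕ) (hn : 2 ≤ n) (r : ℝ) (hr : 0 < r)
    (f : ℝ → ℝ) (hf : ContDiffOn ℝ 2 f (Set.Icc 0 r))
    (hf0 : f 0 = 0) (hf'0 : derivWithin f (Set.Icc 0 r) 0 = 1)
    (hfpos : ∀ t ∈ Set.Ioc (0:ℝ) r, 0 < f t)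
    (lam : ℝ) (φ : ℝ → ℝ) (hφ : ContDiffOn ℝ 2 φ (Set.Icc 0 r))
    (hφpos : ∀ t ∈ Set.Ico (0:ℝ) r, 0 < φ t) (hφr : φ r = 0)
    (hφ'0 : derivWithin φ (Set.Icc 0 r) 0 = 0)
    (hφode : ∀ t ∈ Set.Ioo (0:ℝ) r,
      deriv (deriv φ) t + ((n : ℝ) - 1) * (deriv f t / f t) * deriv φ t + lam * φ t = 0) :
    lam ≥ 1 / (∫ σ in (0:ℝ)..r, (1 / f σ ^ (n - 1)) * ∫ s in (0:ℝ)..σ, f s ^ (n - 1)) := by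
  have hn1 : n - 1 ≠ 0 := by omega
  have hucc : Set.uIcc (0:ℝ) r = Set.Icc 0 r := Set.uIcc_of_le hr.le
  have hfc : ContinuousOn f (Set.Icc 0 r) := hf.continuousOn
  have hφc : ContinuousOn φ (Set.Icc 0 r) := hφ.continuousOn
  have hfnn : ∀ t ∈ Set.Icc (0:ℝ) r, 0 ≤ f t := by
    intro t ht
    rcases eq_or_lt_of_le ht.1 with h | h
    · rw [← h, hf0]
    · exact (hfpos t ⟨h, ht.2⟩).le
  have hφnn : ∀ t ∈ Set.Icc (0:ℝ) r, 0 ≤ φ t := by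
    intro t ht
    rcases eq_or_lt_of_le ht.2 with h | h
    · rw [h, hφr]
    · exact (hφpos t ⟨ht.1, h⟩).le
  have hgc : ContinuousOn (fun t => f t ^ (n-1)) (Set.Icc 0 r) := hfc.pow _
  have hgpos : ∀ t ∈ Set.Ioc (0:ℝ) r, 0 < f t ^ (n-1) := fun t ht => pow_pos (hfpos t ht) _
  have hgnn : ∀ t ∈ Set.Icc (0:ℝ) r, 0 ≤ f t ^ (n-1) := fun t ht => pow_nonneg (hfnn t ht) _
  have hmem : ∀ t ∈ Set.Ioo (0:ℝ) r, Set.Icc (0:ℝ) r ∈ nhds t := fun t ht => Icc_mem_nhds ht.1 ht.2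
  have hΦ'c : ContinuousOn (derivWithin φ (Set.Icc 0 r)) (Set.Icc 0 r) :=
    hφ.continuousOn_derivWithin (uniqueDiffOn_Icc hr) one_le_two
  have hΦ'eq : ∀ t ∈ Set.Ioo (0:ℝ) r, derivWithin φ (Set.Icc 0 r) t = deriv φ t :=
    fun t ht => derivWithin_of_mem_nhds (hmem t ht)
  have hφd : ∀ t ∈ Set.Ioo (0:ℝ) r, HasDerivAt φ (deriv φ t) t := by
    intro t ht
    exact ((hφ.contDiffAt (hmem t ht)).differentiableAt (by norm_num)).hasDerivAt
  have hψcd : ContDiffOn ℝ 1 (deriv φ) (Set.Ioo 0 r) :=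
    (hφ.mono Set.Ioo_subset_Icc_self).deriv_of_isOpen isOpen_Ioo (by norm_num)
  have hψd : ∀ t ∈ Set.Ioo (0:ℝ) r, HasDerivAt (deriv φ) (deriv (deriv φ) t) t := fun t ht =>
    (((hψcd.differentiableOn (by norm_num)).differentiableAt (isOpen_Ioo.mem_nhds ht))).hasDerivAt
  have hfd : ∀ t ∈ Set.Ioo (0:ℝ) r, HasDerivAt f (deriv f t) t := fun t ht =>
    ((hf.contDiffAt (hmem t ht)).differentiableAt (by norm_num)).hasDerivAt
  -- the primitive F
  have hgφc : ContinuousOn (fun s => f s ^ (n-1) * φ s) (Set.Icc 0 r) := hgc.mul hφc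
  have hgφint : ∀ t ∈ Set.Icc (0:ℝ) r,
      IntervalIntegrable (fun s => f s ^ (n-1) * φ s) MeasureTheory.volume 0 t := by
    intro t ht
    apply ContinuousOn.intervalIntegrable
    apply hgφc.mono
    rw [Set.uIcc_of_le ht.1]
    exact Set.Icc_subset_Icc le_rfl ht.2
  set F : ℝ → ℝ := fun t => ∫ s in (0:ℝ)..t, f s ^ (n-1) * φ s with hFdef
  have hFc : ContinuousOn F (Set.Icc 0 r) := by
    have := intervalIntegral.continuousOn_primitive_interval
      (f := fun s => f s ^ (n-1) * φ s) (a := (0:ℝ)) (b := r) (μ := MeasureTheory.volume)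
      (by rw [hucc]; exact hgφc.integrableOn_compact isCompact_Icc)
    rwa [hucc] at this
  have hF0 : F 0 = 0 := by simp [hFdef]
  have hFd : ∀ t ∈ Set.Ioo (0:ℝ) r, HasDerivAt F (f t ^ (n-1) * φ t) t := by
    intro t ht
    refine intervalIntegral.integral_hasDerivAt_right (hgφint t (Set.Ioo_subset_Icc_self ht))
      ?_ (((hgφc.mono Set.Ioo_subset_Icc_self)).continuousAt (isOpen_Ioo.mem_nhds ht))
    exact (hgφc.mono Set.Ioo_subset_Icc_self).stronglyMeasurableAtFilter isOpen_Ioo t ht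
  -- the function K = f^(n-1) φ' + lam F is constant 0 on (0, r)
  set K : ℝ → ℝ := fun t => f t ^ (n-1) * derivWithin φ (Set.Icc 0 r) t + lam * F t with hKdef
  have hKc : ContinuousOn K (Set.Icc 0 r) := (hgc.mul hΦ'c).add (continuousOn_const.mul hFc)
  have hK0 : K 0 = 0 := by simp [hKdef, hf0, hF0, zero_pow hn1]
  have hKd : ∀ t ∈ Set.Ioo (0:ℝ) r, HasDerivAt K 0 t := by
    intro t ht
    have hft : f t ≠ 0 := (hfpos t ⟨ht.1, ht.2.le⟩).ne'
    have hd1 : HasDerivAt (fun y => f y ^ (n-1) * deriv φ y + lam * F y)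
        ((↑(n-1) * f t ^ (n-1-1) * deriv f t) * deriv φ t + f t ^ (n-1) * deriv (deriv φ) t
          + lam * (f t ^ (n-1) * φ t)) t :=
      (((hfd t ht).pow (n-1)).mul (hψd t ht)).add ((hFd t ht).const_mul lam)
    have heq : K =ᶠ[nhds t] fun y => f y ^ (n-1) * deriv φ y + lam * F y := by
      filter_upwards [isOpen_Ioo.mem_nhds ht] with y hy
      simp only [hKdef, hΦ'eq y hy]
    have hode' : deriv (deriv φ) t * f t + ((n:ℝ)-1) * deriv f t * deriv φ t
        + lam * φ t * f t = 0 := by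
      have h := hφode t ht
      field_simp at h
      linarith
    have hD : (↑(n-1) * f t ^ (n-1-1) * deriv f t) * deriv φ t + f t ^ (n-1) * deriv (deriv φ) t
        + lam * (f t ^ (n-1) * φ t) = 0 := by
      have hcast : ((n-1 : ℕ) : ℝ) = (n:ℝ) - 1 := by
        push_cast [Nat.cast_sub (by omega : 1 ≤ n)]
        ring
      have hpow2 : n - 1 - 1 = n - 2 := by omega
      have hpow : f t ^ (n-1) = f t ^ (n-2) * f t := by
        rw [← pow_succ]
        congr 1
        omega
      rw [hpow2, hcast, hpow]
      linear_combination (f t ^ (n-2)) * hode'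
    rw [← hD]
    exact hd1.congr_of_eventuallyEq heq
  have hKconst : ∀ s ∈ Set.Ioo (0:ℝ) r, ∀ t ∈ Set.Ioo (0:ℝ) r, s ≤ t → K t = K s := by
    intro s hs t ht hst
    have hsub : Set.Icc s t ⊆ Set.Ioo 0 r :=
      fun x hx => ⟨lt_of_lt_of_le hs.1 hx.1, lt_of_le_of_lt hx.2 ht.2⟩
    exact constant_of_has_deriv_right_zero
      (fun x hx => (hKd x (hsub hx)).continuousAt.continuousWithinAt)
      (fun x hx => (hKd x (hsub (Set.Ico_subset_Icc_self hx))).hasDerivWithinAt)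
      t (Set.right_mem_Icc.2 hst)
  have hKzero : ∀ t ∈ Set.Ioo (0:ℝ) r, K t = 0 := by
    intro t ht
    have hne : (nhdsWithin (0:ℝ) (Set.Ioo 0 t)).NeBot := by
      rw [← mem_closure_iff_nhdsWithin_neBot, closure_Ioo (ne_of_lt ht.1)]
      exact ⟨le_rfl, ht.1.le⟩
    have hsub' : Set.Ioo (0:ℝ) t ⊆ Set.Icc 0 r :=
      fun x hx => ⟨hx.1.le, (hx.2.trans ht.2).le⟩
    have h1 : Filter.Tendsto K (nhdsWithin 0 (Set.Ioo 0 t)) (nhds (K 0)) :=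
      (hKc 0 (Set.left_mem_Icc.2 hr.le)).mono hsub'
    have h2 : Filter.Tendsto K (nhdsWithin 0 (Set.Ioo 0 t)) (nhds (K t)) := by
      apply Filter.Tendsto.congr' _ tendsto_const_nhds
      filter_upwards [self_mem_nhdsWithin] with x hx
      exact hKconst x ⟨hx.1, hx.2.trans ht.2⟩ t ht hx.2.le
    rw [← hK0]
    exact tendsto_nhds_unique h2 h1
  -- expression for deriv φ
  have hkey : ∀ t ∈ Set.Ioo (0:ℝ) r, deriv φ t = -(lam * F t) / (f t ^ (n-1)) := by
    intro t ht
    have hgt : 0 < f t ^ (n-1) := hgpos t ⟨ht.1, ht.2.le⟩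
    have hz := hKzero t ht
    simp only [hKdef, hΦ'eq t ht] at hz
    field_simp
    linarith
  have hFnn : ∀ t ∈ Set.Icc (0:ℝ) r, 0 ≤ F t := fun t ht =>
    intervalIntegral.integral_nonneg ht.1 (fun u hu =>
      mul_nonneg (hgnn u ⟨hu.1, hu.2.trans ht.2⟩) (hφnn u ⟨hu.1, hu.2.trans ht.2⟩))
  have hφ0pos : 0 < φ 0 := hφpos 0 ⟨le_rfl, hr⟩
  have hlam : 0 < lam := by
    by_contra hl
    push_neg at hl
    have hmono : MonotoneOn φ (Set.Icc 0 r) := by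
      apply monotoneOn_of_deriv_nonneg (convex_Icc 0 r) hφc
      · intro x hx
        rw [interior_Icc] at hx
        exact (hφd x hx).differentiableAt.differentiableWithinAt
      · intro x hx
        rw [interior_Icc] at hx
        rw [hkey x hx]
        apply div_nonneg _ (hgnn x (Set.Ioo_subset_Icc_self hx))
        have := hFnn x (Set.Ioo_subset_Icc_self hx)
        nlinarith
    have h0r := hmono (Set.left_mem_Icc.2 hr.le) (Set.right_mem_Icc.2 hr.le) hr.le
    rw [hφr] at h0r
    linarith
  have hanti : AntitoneOn φ (Set.Icc 0 r) := by
    apply antitoneOn_of_deriv_nonpos (convex_Icc 0 r) hφc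
    · intro x hx
      rw [interior_Icc] at hx
      exact (hφd x hx).differentiableAt.differentiableWithinAt
    · intro x hx
      rw [interior_Icc] at hx
      rw [hkey x hx]
      apply div_nonpos_of_nonpos_of_nonneg _ (hgnn x (Set.Ioo_subset_Icc_self hx))
      have := hFnn x (Set.Ioo_subset_Icc_self hx)
      nlinarith
  have hφle : ∀ s ∈ Set.Icc (0:ℝ) r, φ s ≤ φ 0 :=
    fun s hs => hanti (Set.left_mem_Icc.2 hr.le) hs hs.1
  have hgint : ∀ t ∈ Set.Icc (0:ℝ) r,
      IntervalIntegrable (fun s => f s ^ (n-1)) MeasureTheory.volume 0 t := by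
    intro t ht
    apply ContinuousOn.intervalIntegrable
    apply hgc.mono
    rw [Set.uIcc_of_le ht.1]
    exact Set.Icc_subset_Icc le_rfl ht.2
  have hFle : ∀ σ ∈ Set.Icc (0:ℝ) r, F σ ≤ φ 0 * ∫ s in (0:ℝ)..σ, f s ^ (n-1) := by
    intro σ hσ
    have hm : F σ ≤ ∫ s in (0:ℝ)..σ, φ 0 * f s ^ (n-1) := by
      apply intervalIntegral.integral_mono_on hσ.1 (hgφint σ hσ) ((hgint σ hσ).const_mul _)
      intro x hx
      have hxI : x ∈ Set.Icc (0:ℝ) r := ⟨hx.1, hx.2.trans hσ.2⟩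
      calc f x ^ (n-1) * φ x ≤ f x ^ (n-1) * φ 0 :=
            mul_le_mul_of_nonneg_left (hφle x hxI) (hgnn x hxI)
        _ = φ 0 * f x ^ (n-1) := mul_comm _ _
    rwa [intervalIntegral.integral_const_mul] at hm
  by_cases hInt : IntervalIntegrable
      (fun σ => (1 / f σ ^ (n - 1)) * ∫ s in (0:ℝ)..σ, f s ^ (n - 1)) MeasureTheory.volume 0 r
  swap
  · rw [intervalIntegral.integral_undef hInt]
    simpa using hlam.le
  · -- integrability of deriv φ
    have hder_int : IntervalIntegrable (fun t => deriv φ t) MeasureTheory.volume 0 r := by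
      have h1 : IntervalIntegrable (derivWithin φ (Set.Icc 0 r)) MeasureTheory.volume 0 r := by
        apply ContinuousOn.intervalIntegrable
        rwa [hucc]
      rw [intervalIntegrable_iff_integrableOn_Ioo_of_le hr.le] at h1 ⊢
      exact h1.congr_fun (fun x hx => hΦ'eq x hx) measurableSet_Ioo
    have hFTC : ∫ t in (0:ℝ)..r, deriv φ t = φ r - φ 0 :=
      intervalIntegral.integral_eq_sub_of_hasDeriv_right_of_le hr.le hφc
        (fun x hx => (hφd x hx).hasDerivWithinAt) hder_int
    have hae : (fun t => -(deriv φ t)) ≤ᶠ[MeasureTheory.ae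
        (MeasureTheory.volume.restrict (Set.Icc 0 r))]
        (fun t => (lam * φ 0) * ((1 / f t ^ (n - 1)) * ∫ s in (0:ℝ)..t, f s ^ (n - 1))) := by
      have hsub : ∀ t ∈ Set.Ioo (0:ℝ) r, -(deriv φ t) ≤
          (lam * φ 0) * ((1 / f t ^ (n - 1)) * ∫ s in (0:ℝ)..t, f s ^ (n - 1)) := by
        intro t ht
        have hgt : 0 < f t ^ (n-1) := hgpos t ⟨ht.1, ht.2.le⟩
        have hGnn : 0 ≤ ∫ s in (0:ℝ)..t, f s ^ (n-1) :=
          intervalIntegral.integral_nonneg ht.1.le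
            (fun u hu => hgnn u ⟨hu.1, hu.2.trans ht.2.le⟩)
        rw [hkey t ht, neg_div, neg_neg]
        have hnum : lam * F t ≤ lam * (φ 0 * ∫ s in (0:ℝ)..t, f s ^ (n-1)) :=
          mul_le_mul_of_nonneg_left (hFle t (Set.Ioo_subset_Icc_self ht)) hlam.le
        calc lam * F t / f t ^ (n-1) ≤ lam * (φ 0 * ∫ s in (0:ℝ)..t, f s ^ (n-1)) / f t ^ (n-1) := by
              gcongr
          _ = (lam * φ 0) * ((1 / f t ^ (n - 1)) * ∫ s in (0:ℝ)..t, f s ^ (n - 1)) := by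
              field_simp
      rw [Filter.EventuallyLE, MeasureTheory.ae_restrict_iff' measurableSet_Icc]
      have hnull : MeasureTheory.volume ({0, r} : Set ℝ) = 0 :=
        (Set.toFinite _).measure_zero _
      refine MeasureTheory.ae_iff.2 (MeasureTheory.measure_mono_null ?_ hnull)
      intro t ht
      simp only [Set.mem_setOf_eq] at ht
      push_neg at ht
      rcases ht with ⟨htI, hlt⟩
      by_contra hmem2
      simp only [Set.mem_insert_iff, Set.mem_singleton_iff] at hmem2
      push_neg at hmem2
      exact absurd (hsub t ⟨lt_of_le_of_ne htI.1 (Ne.symm hmem2.1),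
        lt_of_le_of_ne htI.2 hmem2.2⟩) (not_le.2 hlt)
    have hnegint : IntervalIntegrable (fun t => -(deriv φ t)) MeasureTheory.volume 0 r :=
      hder_int.neg
    have hineq := intervalIntegral.integral_mono_ae_restrict hr.le hnegint
      (hInt.const_mul (lam * φ 0)) hae
    rw [intervalIntegral.integral_neg, hFTC, intervalIntegral.integral_const_mul, hφr] at hineq
    set I := ∫ σ in (0:ℝ)..r, (1 / f σ ^ (n - 1)) * ∫ s in (0:ℝ)..σ, f s ^ (n - 1) with hIdef
    have h1 : 1 ≤ lam * I := by nlinarith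
    have hIpos : 0 < I := by nlinarith
    rw [ge_iff_le, div_le_iff₀ hIpos]
    linarith
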